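/- Lemma 5.5 (Approximation Guarantee, existence form): For every ε with 0 < ε < 1 and every rent-division instance v satisfying the standing assumptions, there exist utility functions v̄ : Fin n → Fin n → ℝ → ℝ such that (i) each v̄ a r is continuous, strictly decreasing, and piecewise linear, (ii) on every affine piece of every v̄ a r the slope equals −(1+ε)^k for some integer k (all slopes are integer powers of (1+ε) in magnitude), and (iii) every envy-free solution (π, p) of the instance with utilities v̄ is an ε-envy-free solution of the instance with utilities v. -/

import Mathlib

/-- A function `f : ℝ → ℝ` is piecewise linear with all slopes in `S`: there
are finitely many breakpoints `b 0 < … < b t` such that `f` is affine on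
`(-∞, b 0]`, on each `[b i, b (i+1)]`, and on `[b t, ∞)`, with each affine
piece having slope in `S`. -/
def PiecewiseLinearWith (S : ℝ → Prop) (f : ℝ → ℝ) : Prop :=
  ∃ (t : ℕ) (b : Fin (t + 1) → ℝ), StrictMono b ∧
    (∃ m c : ℝ, S m ∧ ∀ x ≤ b 0, f x = m * x + c) ∧
    (∀ i : Fin t, ∃ m c : ℝ, S m ∧
      ∀ x ∈ Set.Icc (b i.castSucc) (b i.succ), f x = m * x + c) ∧
    (∃ m c : ℝ, S m ∧ ∀ x, b (Fin.last t) ≤ x → f x = m * x + c)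

/-- A function `f : ℝ → ℝ` is piecewise linear. -/
def PiecewiseLinear (f : ℝ → ℝ) : Prop :=
  PiecewiseLinearWith (fun _ => True) f

/-- A solution `(π, p)` is `ε`-envy-free. -/
def EpsEF (n : ℕ) (ε : ℝ) (v : Fin n → Fin n → ℝ → ℝ)
    (π : Equiv.Perm (Fin n)) (p : Fin n → ℝ) : Prop :=
  ∀ a : Fin n,
    (0 ≤ v a (π a) (p (π a)) →
      ∀ r, v a r (p r) ≤ (1 + ε) * v a (π a) (p (π a))) ∧
    (v a (π a) (p (π a)) < 0 →
      ∀ r, (1 + ε) * v a r (p r) ≤ v a (π a) (p (π a)))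

namespace ApproxGuarAux
open Finset
variable {t : ℕ}

def clamp (b : Fin (t+1) → ℝ) (j : Fin t) (x : ℝ) : ℝ :=
  min (max x (b j.castSucc)) (b j.succ)

def pwF (b : Fin (t+1) → ℝ) (sL : ℝ) (s : Fin t → ℝ) (sR : ℝ) (x : ℝ) : ℝ :=
  sL * min x (b 0) + (∑ j, s j * (clamp b j x - b j.castSucc))
    + sR * max (x - b (Fin.last t)) 0

lemma continuous_pwF (b : Fin (t+1) → ℝ) (sL s sR) : Continuous (pwF b sL s sR) := by
  unfold pwF clamp; fun_prop

lemma succ_le_castSucc {i j : Fin t} (h : j < i) : j.succ ≤ i.castSucc := by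
  rw [Fin.le_def, Fin.val_succ, Fin.coe_castSucc]; exact h

lemma pwF_sub (b : Fin (t+1) → ℝ) (sL s sR x y) : pwF b sL s sR y - pwF b sL s sR x =
  sL * (min y (b 0) - min x (b 0)) + (∑ j, s j * (clamp b j y - clamp b j x))
    + sR * (max (y - b (Fin.last t)) 0 - max (x - b (Fin.last t)) 0) := by
  simp only [pwF, mul_sub, Finset.sum_sub_distrib]; ring

variable {b : Fin (t+1) → ℝ}

lemma hb0cs (hb : StrictMono b) (j : Fin t) : b 0 ≤ b j.castSucc := hb.monotone (Fin.zero_le _)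
lemma hcs (hb : StrictMono b) (j : Fin t) : b j.castSucc ≤ b j.succ :=
  hb.monotone (Fin.castSucc_le_succ j)
lemma hb0last (hb : StrictMono b) : b 0 ≤ b (Fin.last t) := hb.monotone (Fin.zero_le _)
lemma hsucclast (hb : StrictMono b) (j : Fin t) : b j.succ ≤ b (Fin.last t) :=
  hb.monotone (Fin.le_last _)

lemma clamp_of_le (hb : StrictMono b) {x : ℝ} {j : Fin t} (hx : x ≤ b j.castSucc) :
    clamp b j x = b j.castSucc := by
  unfold clamp; rw [max_eq_right hx, min_eq_left (hcs hb j)]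

lemma clamp_of_ge (hb : StrictMono b) {x : ℝ} {j : Fin t} (hx : b j.succ ≤ x) :
    clamp b j x = b j.succ := by
  unfold clamp; rw [max_eq_left (le_trans (hcs hb j) hx), min_eq_right hx]

lemma clamp_of_mem {x : ℝ} {j : Fin t} (h1 : b j.castSucc ≤ x) (h2 : x ≤ b j.succ) :
    clamp b j x = x := by
  unfold clamp; rw [max_eq_left h1, min_eq_left h2]

lemma pwF_left (hb : StrictMono b) {sL sR : ℝ} {s : Fin t → ℝ} {x : ℝ} (hx : x ≤ b 0) :
    pwF b sL s sR x = sL * x := by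
  unfold pwF
  rw [min_eq_left hx, Finset.sum_eq_zero (fun j _ => by
    rw [clamp_of_le hb (le_trans hx (hb0cs hb j)), sub_self, mul_zero]),
    max_eq_right (sub_nonpos.2 (le_trans hx (hb0last hb))), mul_zero, add_zero, add_zero]

lemma pwF_mid (hb : StrictMono b) {sL sR : ℝ} {s : Fin t → ℝ} {x : ℝ} (i : Fin t)
    (hx1 : b i.castSucc ≤ x) (hx2 : x ≤ b i.succ) :
    pwF b sL s sR x - pwF b sL s sR (b i.castSucc) = s i * (x - b i.castSucc) := by
  rw [pwF_sub]
  have h0x : b 0 ≤ x := le_trans (hb0cs hb i) hx1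
  have hxlast : x ≤ b (Fin.last t) := le_trans hx2 (hsucclast hb i)
  rw [min_eq_right h0x, min_eq_right (hb0cs hb i), sub_self, mul_zero, zero_add,
    max_eq_right (sub_nonpos.2 hxlast),
    max_eq_right (sub_nonpos.2 (le_trans (hcs hb i) (hsucclast hb i))),
    sub_self, mul_zero, add_zero]
  rw [Finset.sum_eq_single i]
  · rw [clamp_of_mem hx1 hx2, clamp_of_le hb le_rfl]
  · intro j _ hj
    rcases lt_or_gt_of_ne hj with h | h
    · rw [clamp_of_ge hb (le_trans (hb.monotone (succ_le_castSucc h)) hx1),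
        clamp_of_ge hb (hb.monotone (succ_le_castSucc h)), sub_self, mul_zero]
    · rw [clamp_of_le hb (le_trans hx2 (hb.monotone (succ_le_castSucc h))),
        clamp_of_le hb (le_trans (hcs hb i) (hb.monotone (succ_le_castSucc h))),
        sub_self, mul_zero]
  · intro h; exact absurd (Finset.mem_univ i) h

lemma pwF_right (hb : StrictMono b) {sL sR : ℝ} {s : Fin t → ℝ} {x : ℝ}
    (hx : b (Fin.last t) ≤ x) :
    pwF b sL s sR x - pwF b sL s sR (b (Fin.last t)) = sR * (x - b (Fin.last t)) := by
  rw [pwF_sub]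
  rw [min_eq_right (le_trans (hb0last hb) hx), min_eq_right (hb0last hb), sub_self, mul_zero,
    zero_add, Finset.sum_eq_zero (fun j _ => by
      rw [clamp_of_ge hb (le_trans (hsucclast hb j) hx), clamp_of_ge hb (hsucclast hb j),
        sub_self, mul_zero]), zero_add,
    max_eq_left (sub_nonneg.2 hx), max_eq_right (sub_nonpos.2 le_rfl), sub_zero]

lemma pwF_diff_mono {sL sR sL' sR' : ℝ} {s s' : Fin t → ℝ}
    (hL : sL ≤ sL') (hs : ∀ j, s j ≤ s' j) (hR : sR ≤ sR') {x y : ℝ} (hxy : x ≤ y) :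
    pwF b sL s sR y - pwF b sL s sR x ≤ pwF b sL' s' sR' y - pwF b sL' s' sR' x := by
  rw [pwF_sub, pwF_sub]
  have d0 : 0 ≤ min y (b 0) - min x (b 0) := sub_nonneg.2 (min_le_min hxy le_rfl)
  have dj : ∀ j : Fin t, 0 ≤ clamp b j y - clamp b j x := fun j =>
    sub_nonneg.2 (min_le_min (max_le_max hxy le_rfl) le_rfl)
  have dR : 0 ≤ max (y - b (Fin.last t)) 0 - max (x - b (Fin.last t)) 0 :=
    sub_nonneg.2 (max_le_max (sub_le_sub_right hxy _) le_rfl)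
  exact add_le_add (add_le_add (mul_le_mul_of_nonneg_right hL d0)
    (Finset.sum_le_sum fun j _ => mul_le_mul_of_nonneg_right (hs j) (dj j)))
    (mul_le_mul_of_nonneg_right hR dR)

lemma pwF_smul {sL sR β : ℝ} {s : Fin t → ℝ} {x : ℝ} :
    pwF b (β*sL) (fun j => β * s j) (β*sR) x = β * pwF b sL s sR x := by
  simp only [pwF, Finset.mul_sum, mul_add, mul_assoc]

lemma round_slope {ε : ℝ} (hε : 0 < ε) (sp : ℝ) (hsp : 0 < sp) :
    ∃ k : ℤ, sp ≤ (1+ε)^k ∧ (1+ε)^k ≤ (1+ε)*sp := by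
  have hβ : (1:ℝ) < 1 + ε := by linarith
  have hβ0 : (0:ℝ) < 1 + ε := by linarith
  set l := Real.logb (1+ε) sp with hl
  refine ⟨⌈l⌉, ?_, ?_⟩
  · have h1 : sp = (1+ε) ^ l := (Real.rpow_logb hβ0 (ne_of_gt hβ) hsp).symm
    have h2 : (1+ε:ℝ) ^ (l:ℝ) ≤ (1+ε) ^ ((⌈l⌉:ℤ):ℝ) :=
      Real.rpow_le_rpow_left_iff hβ |>.2 (Int.le_ceil l)
    rw [Real.rpow_intCast] at h2
    linarith [h1 ▸ h2]
  · have h2 : (1+ε:ℝ) ^ ((⌈l⌉:ℤ):ℝ) ≤ (1+ε) ^ (l + 1 : ℝ) :=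
      Real.rpow_le_rpow_left_iff hβ |>.2 (le_of_lt (Int.ceil_lt_add_one l))
    rw [Real.rpow_intCast, Real.rpow_add hβ0, Real.rpow_one,
      Real.rpow_logb hβ0 (ne_of_gt hβ) hsp] at h2
    linarith

/-- Round a single utility function. -/
lemma round_one {ε : ℝ} (hε₀ : 0 < ε) (f : ℝ → ℝ) (hc : Continuous f)
    (ha : StrictAnti f) (hpl : PiecewiseLinear f) (h0 : 0 ≤ f 0) :
    ∃ g : ℝ → ℝ, Continuous g ∧ StrictAnti g ∧
      PiecewiseLinearWith (fun m => ∃ k : ℤ, m = -((1 + ε) ^ k)) g ∧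
      (∀ x, 0 ≤ f x → f x ≤ g x ∧ g x ≤ (1+ε) * f x) ∧
      (∀ x, f x < 0 → (1+ε) * f x ≤ g x ∧ g x ≤ f x) := by
  obtain ⟨t, b, hb, ⟨mL, cL, -, hL⟩, hmid, ⟨mR, cR, -, hR⟩⟩ := hpl
  choose sm sc htr hsm using hmid
  clear htr
  -- slopes are negative
  have hmLneg : mL < 0 := by
    have h1 := hL (b 0 - 1) (by linarith)
    have h2 := hL (b 0) le_rfl
    have h3 := ha (show b 0 - 1 < b 0 by linarith)
    nlinarith
  have hsmneg : ∀ i, sm i < 0 := by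
    intro i
    have hlt : b i.castSucc < b i.succ := hb Fin.castSucc_lt_succ
    have h1 := hsm i (b i.castSucc) ⟨le_rfl, le_of_lt hlt⟩
    have h2 := hsm i (b i.succ) ⟨le_of_lt hlt, le_rfl⟩
    have h3 := ha hlt
    nlinarith
  have hmRneg : mR < 0 := by
    have h1 := hR (b (Fin.last t)) le_rfl
    have h2 := hR (b (Fin.last t) + 1) (by linarith)
    have h3 := ha (lt_add_one (b (Fin.last t)))
    nlinarith
  -- rounded slopes
  obtain ⟨kL, hkL1, hkL2⟩ := round_slope hε₀ (-mL) (by linarith)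
  choose km hkm1 hkm2 using fun i => round_slope hε₀ (-(sm i)) (by linarith [hsmneg i])
  obtain ⟨kR, hkR1, hkR2⟩ := round_slope hε₀ (-mR) (by linarith)
  -- F reproduces f (up to additive constant), G is the rounded version
  have key : ∀ x, f x + pwF b (-mL) (fun i => -(sm i)) (-mR) x
      = f (b 0) + pwF b (-mL) (fun i => -(sm i)) (-mR) (b 0) := by
    have base : ∀ x ≤ b 0, f x + pwF b (-mL) (fun i => -(sm i)) (-mR) x
        = f (b 0) + pwF b (-mL) (fun i => -(sm i)) (-mR) (b 0) := by
      intro x hx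
      rw [hL x hx, hL (b 0) le_rfl, pwF_left hb hx, pwF_left hb le_rfl]; ring
    have step : ∀ i : Fin (t+1), ∀ x ≤ b i,
        f x + pwF b (-mL) (fun i => -(sm i)) (-mR) x
        = f (b 0) + pwF b (-mL) (fun i => -(sm i)) (-mR) (b 0) := by
      intro i
      induction i using Fin.induction with
      | zero => exact base
      | succ i ih =>
        intro x hx
        rcases le_or_gt x (b i.castSucc) with h | h
        · exact ih x h
        · have e1 := hsm i x ⟨le_of_lt h, hx⟩
          have e2 := hsm i (b i.castSucc) ⟨le_rfl, hcs hb i⟩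
          have e3 := pwF_mid hb (sL := -mL) (sR := -mR) (s := fun i => -(sm i)) i
            (le_of_lt h) hx
          have e4 := ih (b i.castSucc) le_rfl
          linear_combination e1 + e3 + e4 - e2
    intro x
    rcases le_or_gt x (b (Fin.last t)) with h | h
    · exact step (Fin.last t) x h
    · have e1 := hR x (le_of_lt h)
      have e2 := hR (b (Fin.last t)) le_rfl
      have e3 := pwF_right hb (sL := -mL) (sR := -mR) (s := fun i => -(sm i)) (le_of_lt h)
      have e4 := step (Fin.last t) (b (Fin.last t)) le_rfl
      linear_combination e1 + e3 + e4 - e2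
  have Fdiff : ∀ x y : ℝ, pwF b (-mL) (fun i => -(sm i)) (-mR) y
      - pwF b (-mL) (fun i => -(sm i)) (-mR) x = f x - f y := by
    intro x y
    have k1 := key x
    have k2 := key y
    linarith
  -- root of f
  obtain ⟨z, hzmem, hfz⟩ : ∃ z, z ∈ Set.Icc (0:ℝ) (max 0 (max (b (Fin.last t)) (cR / (-mR))))
      ∧ f z = 0 := by
    set x1 := max 0 (max (b (Fin.last t)) (cR / (-mR))) with hx1def
    have hx1R : b (Fin.last t) ≤ x1 := le_trans (le_max_left _ _) (le_max_right _ _)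
    have hfx1 : f x1 ≤ 0 := by
      rw [hR x1 hx1R]
      have hdiv : cR / (-mR) ≤ x1 := le_trans (le_max_right _ _) (le_max_right _ _)
      have : mR * x1 ≤ mR * (cR / (-mR)) := mul_le_mul_of_nonpos_left hdiv (le_of_lt hmRneg)
      have heq : mR * (cR / (-mR)) = -cR := by
        rw [mul_comm, div_mul_eq_mul_div, div_eq_iff (show (-mR) ≠ 0 by linarith)]; ring
      linarith
    have h01 : (0:ℝ) ≤ x1 := le_max_left _ _
    have := intermediate_value_Icc' h01 hc.continuousOn
    have h0mem : (0:ℝ) ∈ Set.Icc (f x1) (f 0) := ⟨hfx1, h0⟩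
    obtain ⟨z, hz1, hz2⟩ := this h0mem
    exact ⟨z, hz1, hz2⟩
  -- the rounded function
  set S : Fin t → ℝ := fun i => (1+ε)^(km i) with hS
  refine ⟨fun x => pwF b ((1+ε)^kL) S ((1+ε)^kR) z - pwF b ((1+ε)^kL) S ((1+ε)^kR) x,
    ?_, ?_, ?_, ?_, ?_⟩
  · exact continuous_const.sub (continuous_pwF b _ _ _)
  · -- StrictAnti
    intro x y hxy
    have m1 : pwF b (-mL) (fun i => -(sm i)) (-mR) y - pwF b (-mL) (fun i => -(sm i)) (-mR) x
        ≤ pwF b ((1+ε)^kL) S ((1+ε)^kR) y - pwF b ((1+ε)^kL) S ((1+ε)^kR) x :=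
      pwF_diff_mono hkL1 hkm1 hkR1 (le_of_lt hxy)
    have hFd := Fdiff x y
    have hfa := ha hxy
    dsimp only
    linarith
  · -- piecewise linear with power slopes
    refine ⟨t, b, hb, ⟨-((1+ε)^kL), pwF b ((1+ε)^kL) S ((1+ε)^kR) z, ⟨kL, rfl⟩, ?_⟩,
      ?_, ⟨-((1+ε)^kR),
        pwF b ((1+ε)^kL) S ((1+ε)^kR) z - pwF b ((1+ε)^kL) S ((1+ε)^kR) (b (Fin.last t))
          + (1+ε)^kR * b (Fin.last t), ⟨kR, rfl⟩, ?_⟩⟩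
    · intro x hx
      have e := pwF_left hb (sL := (1+ε)^kL) (sR := (1+ε)^kR) (s := S) hx
      linear_combination -e
    · intro i
      refine ⟨-(S i), pwF b ((1+ε)^kL) S ((1+ε)^kR) z
          - pwF b ((1+ε)^kL) S ((1+ε)^kR) (b i.castSucc) + S i * b i.castSucc,
        ⟨km i, rfl⟩, ?_⟩
      intro x hx
      have e := pwF_mid hb (sL := (1+ε)^kL) (sR := (1+ε)^kR) (s := S) i hx.1 hx.2
      linear_combination -e
    · intro x hx
      have e := pwF_right hb (sL := (1+ε)^kL) (sR := (1+ε)^kR) (s := S) hx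
      linear_combination -e
  · -- sandwich, nonnegative side
    intro x hfx
    have hxz : x ≤ z := by
      by_contra h
      push_neg at h
      have := ha h
      rw [hfz] at this
      linarith
    have m1 : pwF b (-mL) (fun i => -(sm i)) (-mR) z - pwF b (-mL) (fun i => -(sm i)) (-mR) x
        ≤ pwF b ((1+ε)^kL) S ((1+ε)^kR) z - pwF b ((1+ε)^kL) S ((1+ε)^kR) x :=
      pwF_diff_mono hkL1 hkm1 hkR1 hxz
    have m2 : pwF b ((1+ε)^kL) S ((1+ε)^kR) z - pwF b ((1+ε)^kL) S ((1+ε)^kR) x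
        ≤ pwF b ((1+ε)*(-mL)) (fun i => (1+ε)*(-(sm i))) ((1+ε)*(-mR)) z
          - pwF b ((1+ε)*(-mL)) (fun i => (1+ε)*(-(sm i))) ((1+ε)*(-mR)) x :=
      pwF_diff_mono hkL2 hkm2 hkR2 hxz
    rw [pwF_smul, pwF_smul] at m2
    have hd := Fdiff x z
    rw [hfz] at hd
    have e : (1+ε) * pwF b (-mL) (fun i => -(sm i)) (-mR) z
        - (1+ε) * pwF b (-mL) (fun i => -(sm i)) (-mR) x = (1+ε) * f x := by
      linear_combination (1+ε) * hd
    dsimp only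
    constructor
    · linarith
    · linarith
  · -- sandwich, negative side
    intro x hfx
    have hzx : z ≤ x := by
      by_contra h
      push_neg at h
      have := ha h
      rw [hfz] at this
      linarith
    have m1 : pwF b (-mL) (fun i => -(sm i)) (-mR) x - pwF b (-mL) (fun i => -(sm i)) (-mR) z
        ≤ pwF b ((1+ε)^kL) S ((1+ε)^kR) x - pwF b ((1+ε)^kL) S ((1+ε)^kR) z :=
      pwF_diff_mono hkL1 hkm1 hkR1 hzx
    have m2 : pwF b ((1+ε)^kL) S ((1+ε)^kR) x - pwF b ((1+ε)^kL) S ((1+ε)^kR) z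
        ≤ pwF b ((1+ε)*(-mL)) (fun i => (1+ε)*(-(sm i))) ((1+ε)*(-mR)) x
          - pwF b ((1+ε)*(-mL)) (fun i => (1+ε)*(-(sm i))) ((1+ε)*(-mR)) z :=
      pwF_diff_mono hkL2 hkm2 hkR2 hzx
    rw [pwF_smul, pwF_smul] at m2
    have hd := Fdiff z x
    rw [hfz] at hd
    have e : (1+ε) * pwF b (-mL) (fun i => -(sm i)) (-mR) x
        - (1+ε) * pwF b (-mL) (fun i => -(sm i)) (-mR) z = -((1+ε) * f x) := by
      linear_combination (1+ε) * hd
    dsimp only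
    constructor
    · linarith
    · linarith

end ApproxGuarAux

/-- Lemma 5.5 (Approximation Guarantee, existence form): any instance can be
rounded to a structured instance whose slopes are integer powers of `1 + ε`
(in magnitude), in such a way that every envy-free solution of the rounded
instance is an `ε`-envy-free solution of the original instance. -/
theorem approximation_guarantee
    (n : ℕ) (ε : ℝ) (hε₀ : 0 < ε) (hε₁ : ε < 1)
    (v : Fin n → Fin n → ℝ → ℝ)
    (hcont : ∀ a r, Continuous (v a r))
    (hanti : ∀ a r, StrictAnti (v a r))
    (hpl : ∀ a r, PiecewiseLinear (v a r))
    (hnonneg : ∀ a r, 0 ≤ v a r 0) :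
    ∃ vbar : Fin n → Fin n → ℝ → ℝ,
      (∀ a r, Continuous (vbar a r) ∧ StrictAnti (vbar a r) ∧
        PiecewiseLinearWith
          (fun m => ∃ k : ℤ, m = -((1 + ε) ^ k)) (vbar a r)) ∧
      ∀ (π : Equiv.Perm (Fin n)) (p : Fin n → ℝ),
        (∀ a r, vbar a r (p r) ≤ vbar a (π a) (p (π a))) →
        EpsEF n ε v π p := by
  choose g hgc hga hgpl hpos hneg using fun a r =>
    ApproxGuarAux.round_one hε₀ (v a r) (hcont a r) (hanti a r) (hpl a r) (hnonneg a r)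
  refine ⟨g, fun a r => ⟨hgc a r, hga a r, hgpl a r⟩, ?_⟩
  intro π p hEF a
  constructor
  · intro hV r
    have hEFr := hEF a r
    have hGup := (hpos a (π a) (p (π a)) hV).2
    rcases le_or_gt 0 (v a r (p r)) with hW | hW
    · have := (hpos a r (p r) hW).1
      linarith
    · have : 0 ≤ (1+ε) * v a (π a) (p (π a)) := mul_nonneg (by linarith) hV
      linarith
  · intro hV r
    have hEFr := hEF a r
    have hGup := (hneg a (π a) (p (π a)) hV).2
    rcases lt_or_ge (v a r (p r)) 0 with hW | hW
    · have := (hneg a r (p r) hW).1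
      linarith
    · have h1 := (hpos a r (p r) hW).1
      linarith
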